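/- Let T be a tournament whose vertex set is numbered v1,…,vn, and let G be the backedge graph of T under this numbering. Let ω(G) denote the clique number of G and χ(G) its (graph) chromatic number, and let χ(T) denote the (tournament) chromatic number of T. Then χ(T) ≤ χ(G) ≤ ω(G)·χ(T). -/

import Mathlib

structure Tournament where
  V : Type
  fintype : Fintype V
  adj : V → V → Prop
  asymm : ∀ u v, adj u v → ¬ adj v u
  total : ∀ u v, u ≠ v → adj u v ∨ adj v u

attribute [instance] Tournament.fintype

namespace Tournament

/-- A set of vertices is transitive if it includes no cyclic triangle. -/
def IsTransitiveSet (T : Tournament) (A : Set T.V) : Prop :=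
  ∀ a ∈ A, ∀ b ∈ A, ∀ c ∈ A, T.adj a b → T.adj b c → ¬ T.adj c a

/-- The chromatic number of the subtournament induced on `A`. -/
noncomputable def chiOn (T : Tournament) (A : Set T.V) : ℕ :=
  sInf {k | ∃ C : Fin k → Set T.V, (∀ i, T.IsTransitiveSet (C i)) ∧ A ⊆ ⋃ i, C i}

noncomputable def chi (T : Tournament) : ℕ := T.chiOn Set.univ

def outN (T : Tournament) (v : T.V) : Set T.V := {u | T.adj v u}
def inN (T : Tournament) (v : T.V) : Set T.V := {u | T.adj u v}

/-- The domination number of the subtournament induced on `A`. -/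
noncomputable def domOn (T : Tournament) (A : Set T.V) : ℕ :=
  sInf {n | ∃ X : Finset T.V, ↑X ⊆ A ∧ (∀ v ∈ A, v ∉ X → ∃ x ∈ X, T.adj x v) ∧ X.card = n}

noncomputable def dom (T : Tournament) : ℕ := T.domOn Set.univ

/-- `A ⇒ B`: every edge between `A` and `B` is directed from `A` to `B`. -/
def CompleteTo (T : Tournament) (A B : Set T.V) : Prop :=
  ∀ a ∈ A, ∀ b ∈ B, T.adj a b

def CompletePair (T : Tournament) (A B : Set T.V) : Prop :=
  Disjoint A B ∧ T.CompleteTo A B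

/-- `G` has a subtournament inside `A` isomorphic to `H`. -/
def ContainsOn (G : Tournament) (A : Set G.V) (H : Tournament) : Prop :=
  ∃ f : H.V → G.V, Function.Injective f ∧ (∀ u, f u ∈ A) ∧
    ∀ u v, H.adj u v ↔ G.adj (f u) (f v)

def Contains (G H : Tournament) : Prop := G.ContainsOn Set.univ H

def IsHero (H : Tournament) : Prop :=
  ∃ c > 0, ∀ G : Tournament, ¬ G.Contains H → G.chi < c

def IsRebel (H : Tournament) : Prop :=
  ∃ c > 0, ∀ G : Tournament, ¬ G.Contains H → G.dom < c

/-- The backedge graph of `T` under the numbering `σ`: for `i < j`,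
`σ i` and `σ j` are adjacent iff the tournament edge goes from `σ j` to `σ i`. -/
def backedge (T : Tournament) {n : ℕ} (σ : Fin n ≃ T.V) : SimpleGraph T.V where
  Adj u v := (σ.symm u < σ.symm v ∧ T.adj v u) ∨ (σ.symm v < σ.symm u ∧ T.adj u v)
  symm := by
    constructor
    intro u v h
    rcases h with ⟨h1, h2⟩ | ⟨h1, h2⟩
    · exact Or.inr ⟨h1, h2⟩
    · exact Or.inl ⟨h1, h2⟩
  loopless := by
    constructor
    intro v h
    rcases h with ⟨h1, _⟩ | ⟨h1, _⟩ <;> exact lt_irrefl _ h1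

end Tournament

/-- The chromatic number of a graph. -/
noncomputable def gchi {V : Type} (G : SimpleGraph V) : ℕ :=
  sInf {k | ∃ f : V → Fin k, ∀ u v, G.Adj u v → f u ≠ f v}

/-- The clique number of a graph. -/
noncomputable def omegaG {V : Type} (G : SimpleGraph V) : ℕ :=
  sSup {k | ∃ s : Finset V, G.IsNClique k s}

namespace Tournament

/-- backedge adjacency + order gives the backward tournament edge -/
lemma badj_dir (T : Tournament) {n : ℕ} (σ : Fin n ≃ T.V) {a b : T.V}
    (h : (T.backedge σ).Adj a b) (hlt : σ.symm a < σ.symm b) : T.adj b a := by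
  rcases h with ⟨_, h2⟩ | ⟨h1, _⟩
  · exact h2
  · exact absurd hlt (not_lt.mpr h1.le)

/-- non-adjacency in backedge graph + tournament edge gives forward order -/
lemma not_badj_forward (T : Tournament) {n : ℕ} (σ : Fin n ≃ T.V) {a b : T.V}
    (hnadj : ¬ (T.backedge σ).Adj a b) (hab : T.adj a b) :
    σ.symm a < σ.symm b := by
  have hne : a ≠ b := fun h => T.asymm a b hab (h ▸ hab)
  have hne' : σ.symm a ≠ σ.symm b := fun h => hne (σ.symm.injective h)
  rcases lt_or_gt_of_ne hne' with h | h
  · exact h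
  · exact absurd (Or.inr ⟨h, hab⟩) hnadj

end Tournament

lemma enc_inj {a b x y c : ℕ} (hx : x < c) (hy : y < c)
    (h : x + a * c = y + b * c) : a = b ∧ x = y := by
  have hc : 0 < c := lt_of_le_of_lt (Nat.zero_le x) hx
  have ha : (x + a * c) / c = a := by
    rw [Nat.add_mul_div_right _ _ hc, Nat.div_eq_of_lt hx]; omega
  have hb : (y + b * c) / c = b := by
    rw [Nat.add_mul_div_right _ _ hc, Nat.div_eq_of_lt hy]; omega
  have hab : a = b := by rw [← ha, ← hb, h]
  subst hab
  exact ⟨rfl, by omega⟩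

/-- If `G` is the backedge graph of a tournament `T` under a numbering, then
`χ(T) ≤ χ(G) ≤ ω(G)·χ(T)`. -/
theorem backedge_chi_bounds (T : Tournament) {n : ℕ} (σ : Fin n ≃ T.V) :
    T.chi ≤ gchi (T.backedge σ) ∧
      gchi (T.backedge σ) ≤ omegaG (T.backedge σ) * T.chi := by
  classical
  set G := T.backedge σ with hG
  -- gchi set is nonempty
  have hGne : {k | ∃ f : T.V → Fin k, ∀ u v, G.Adj u v → f u ≠ f v}.Nonempty := by
    refine ⟨n, σ.symm, fun u v hadj h => ?_⟩
    exact hadj.ne (σ.symm.injective h)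
  constructor
  · -- χ(T) ≤ χ(G)
    have hmem := Nat.sInf_mem hGne
    obtain ⟨f, hf⟩ := hmem
    refine Nat.sInf_le ⟨fun i => {v | f v = i}, ?_, ?_⟩
    · intro i a ha b hb c hc hab hbc hca
      have hnab : ¬ G.Adj a b := fun h => hf a b h (ha.trans hb.symm)
      have hnbc : ¬ G.Adj b c := fun h => hf b c h (hb.trans hc.symm)
      have hnca : ¬ G.Adj c a := fun h => hf c a h (hc.trans ha.symm)
      have h1 := T.not_badj_forward σ hnab hab
      have h2 := T.not_badj_forward σ hnbc hbc
      have h3 := T.not_badj_forward σ hnca hca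
      exact absurd (h1.trans (h2.trans h3)) (lt_irrefl _)
    · intro v _
      exact Set.mem_iUnion.mpr ⟨f v, rfl⟩
  · -- χ(G) ≤ ω(G) · χ(T)
    -- χ(T) set is nonempty (singletons)
    have hTne : {k | ∃ C : Fin k → Set T.V, (∀ i, T.IsTransitiveSet (C i)) ∧
        (Set.univ : Set T.V) ⊆ ⋃ i, C i}.Nonempty := by
      refine ⟨n, fun i => {σ i}, ?_, ?_⟩
      · intro i a ha b hb c hc hab hbc hca
        rw [Set.mem_singleton_iff] at ha hb
        exact T.asymm a b hab (ha.trans hb.symm ▸ hab)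
      · intro v _
        exact Set.mem_iUnion.mpr ⟨σ.symm v, by simp⟩
    obtain ⟨C, hCtrans, hCcover⟩ := Nat.sInf_mem hTne
    set m := T.chi with hm
    -- choose class index
    have hiv : ∀ v : T.V, ∃ i, v ∈ C i := fun v =>
      Set.mem_iUnion.mp (hCcover (Set.mem_univ v))
    choose idx hidx using hiv
    set ω := omegaG G with hω
    have hωbdd : BddAbove {k | ∃ s : Finset T.V, G.IsNClique k s} := by
      refine ⟨Fintype.card T.V, fun k hk => ?_⟩
      obtain ⟨s, hs⟩ := hk
      exact hs.card_eq ▸ s.card_le_univ.trans_eq (Finset.card_univ)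
    -- rank function
    set R : T.V → Set ℕ := fun v => {k | ∃ s : Finset T.V, G.IsClique ↑s ∧
      ↑s ⊆ C (idx v) ∧ v ∈ s ∧ (∀ u ∈ s, σ.symm u ≤ σ.symm v) ∧ s.card = k} with hR
    have hRne : ∀ v, (R v).Nonempty := by
      intro v
      refine ⟨1, {v}, ?_, ?_, by simp, by simp, by simp⟩
      · simp [SimpleGraph.isClique_iff]
      · simp [hidx v]
    have hRbdd : ∀ v, BddAbove (R v) := by
      intro v
      refine ⟨Fintype.card T.V, fun k hk => ?_⟩
      obtain ⟨s, _, _, _, _, hcard⟩ := hk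
      exact hcard ▸ s.card_le_univ.trans_eq (Finset.card_univ)
    set r : T.V → ℕ := fun v => sSup (R v) with hr
    have hrmem : ∀ v, r v ∈ R v := fun v => Nat.sSup_mem (hRne v) (hRbdd v)
    have h1mem : ∀ v, 1 ∈ R v := by
      intro v
      refine ⟨{v}, ?_, ?_, by simp, by simp, by simp⟩
      · simp [SimpleGraph.isClique_iff]
      · simp [hidx v]
    have hrpos : ∀ v, 1 ≤ r v := fun v => le_csSup (hRbdd v) (h1mem v)
    have hrle : ∀ v, r v ≤ ω := by
      intro v
      refine csSup_le (hRne v) fun k hk => ?_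
      obtain ⟨s, hclique, _, _, _, hcard⟩ := hk
      exact le_csSup hωbdd ⟨s, hclique, hcard⟩
    have hωpos : ∀ v : T.V, 1 ≤ ω := fun v => (hrpos v).trans (hrle v)
    -- key monotonicity along backedges within a class
    have hkey : ∀ u v : T.V, G.Adj u v → idx u = idx v → σ.symm u < σ.symm v →
        r u < r v := by
      intro u v huv hidx_eq hlt
      obtain ⟨s, hclique, hsub, humem, hbound, hcard⟩ := hrmem u
      have hvnot : v ∉ s := by
        intro hv
        exact absurd hlt (not_lt.mpr (hbound v hv))
      have hadj_all : ∀ w ∈ s, G.Adj w v := by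
        intro w hw
        by_cases hwu : w = u
        · exact hwu ▸ huv
        · have hwlt : σ.symm w < σ.symm u := lt_of_le_of_ne (hbound w hw)
            (fun h => hwu (σ.symm.injective h))
        -- w,u adjacent in G since both in clique s
          have hGwu : G.Adj w u := hclique hw humem hwu
          have hadj_uw : T.adj u w := T.badj_dir σ hGwu hwlt
          have hadj_vu : T.adj v u := T.badj_dir σ huv hlt
          have hwC : w ∈ C (idx u) := hsub hw
          have huC : u ∈ C (idx u) := hsub humem
          have hvC : v ∈ C (idx u) := hidx_eq ▸ hidx v
          have hnwv : ¬ T.adj w v :=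
            hCtrans (idx u) v hvC u huC w hwC hadj_vu hadj_uw
          have hne : v ≠ w := fun h => (lt_irrefl _ ((h ▸ hlt).trans hwlt)).elim
          have hadj_vw : T.adj v w := (T.total v w hne).resolve_right hnwv
          exact Or.inl ⟨hwlt.trans hlt, hadj_vw⟩
      have hins : r u + 1 ∈ R v := by
        refine ⟨insert v s, ?_, ?_, Finset.mem_insert_self v s, ?_, ?_⟩
        · rw [Finset.coe_insert]
          refine hclique.insert fun w hw hwv => ?_
          exact (hadj_all w hw).symm
        · intro w hw
          rw [Finset.coe_insert] at hw
          rcases hw with h | hw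
          · simpa [h] using hidx v
          · exact hidx_eq ▸ hsub hw
        · intro w hw
          rcases Finset.mem_insert.mp hw with h | hw
          · exact le_of_eq (by rw [h])
          · exact (hbound w hw).trans hlt.le
        · rw [Finset.card_insert_of_notMem hvnot, hcard]
      exact lt_of_lt_of_le (Nat.lt_succ_self _) (le_csSup (hRbdd v) hins)
    -- build the coloring
    have hbnd : ∀ v : T.V, (r v - 1) + (idx v : ℕ) * ω < ω * m := by
      intro v
      have h1 : r v - 1 < ω := lt_of_lt_of_le (Nat.sub_lt (hrpos v) one_pos) (hrle v)
      calc (r v - 1) + (idx v : ℕ) * ω < ω + (idx v : ℕ) * ω := by omega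
        _ = ((idx v : ℕ) + 1) * ω := by ring
        _ ≤ m * ω := Nat.mul_le_mul_right ω (idx v).isLt
        _ = ω * m := Nat.mul_comm m ω
    refine Nat.sInf_le ⟨fun v => ⟨(r v - 1) + (idx v : ℕ) * ω, hbnd v⟩, ?_⟩
    intro u v hadj heq
    have hωu := hωpos u
    have h1u : r u - 1 < ω := lt_of_lt_of_le (Nat.sub_lt (hrpos u) one_pos) (hrle u)
    have h1v : r v - 1 < ω := lt_of_lt_of_le (Nat.sub_lt (hrpos v) one_pos) (hrle v)
    have heq' : (r u - 1) + (idx u : ℕ) * ω = (r v - 1) + (idx v : ℕ) * ω :=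
      congrArg Fin.val heq
    obtain ⟨hidxeq, hsubeq⟩ := enc_inj h1u h1v heq'
    have hreq : r u = r v := by
      have h4 : r u - 1 + 1 = r v - 1 + 1 := by rw [hsubeq]
      rwa [Nat.sub_add_cancel (hrpos u), Nat.sub_add_cancel (hrpos v)] at h4
    have hidxeq' : idx u = idx v := Fin.ext hidxeq
    have hne := hadj.ne
    have hne' : σ.symm u ≠ σ.symm v := fun h => hne (σ.symm.injective h)
    rcases lt_or_gt_of_ne hne' with hlt | hlt
    · exact absurd hreq (Nat.ne_of_lt (hkey u v hadj hidxeq' hlt))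
    · exact absurd hreq.symm (Nat.ne_of_lt (hkey v u hadj.symm hidxeq'.symm hlt))
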